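/- With α_p = sqrt(2 ln p), β_p = α_p − α_p^{−1} ln(√(2π) α_p), c_p = β_p + α_p^{−1} y for fixed y ∈ ℝ, and φ the standard normal density, one has p · φ(c_p)/c_p → e^{−y} as p → ∞. -/

import Mathlib

open Filter

noncomputable def alphaP (p : ℕ) : ℝ := Real.sqrt (2 * Real.log p)

noncomputable def betaP (p : ℕ) : ℝ :=
  alphaP p - (alphaP p)⁻¹ * Real.log (Real.sqrt (2 * Real.pi) * alphaP p)

noncomputable def cP (p : ℕ) (y : ℝ) : ℝ := betaP p + (alphaP p)⁻¹ * y

noncomputable def stdNormalPDF (x : ℝ) : ℝ :=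
  (Real.sqrt (2 * Real.pi))⁻¹ * Real.exp (-x ^ 2 / 2)

noncomputable def tP (y : ℝ) (p : ℕ) : ℝ :=
  y - Real.log (Real.sqrt (2 * Real.pi) * alphaP p)

noncomputable def uP (y : ℝ) (p : ℕ) : ℝ := (alphaP p)⁻¹ * tP y p

lemma cP_eq (y : ℝ) (p : ℕ) : cP p y = alphaP p + uP y p := by
  unfold cP betaP uP tP; ring

lemma tendsto_sqrt_atTop' : Tendsto Real.sqrt atTop atTop := by
  refine tendsto_atTop_atTop.2 fun b => ⟨b ^ 2, fun x hx => ?_⟩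
  calc b ≤ |b| := le_abs_self b
    _ = Real.sqrt (b ^ 2) := (Real.sqrt_sq_eq_abs b).symm
    _ ≤ Real.sqrt x := Real.sqrt_le_sqrt hx

lemma tendsto_alphaP : Tendsto alphaP atTop atTop := by
  have h : Tendsto (fun p : ℕ => 2 * Real.log p) atTop atTop :=
    (Real.tendsto_log_atTop.comp tendsto_natCast_atTop_atTop).const_mul_atTop (by norm_num)
  exact tendsto_sqrt_atTop'.comp h

lemma tendsto_uP (y : ℝ) : Tendsto (uP y) atTop (nhds 0) := by
  have hU : Tendsto (fun x : ℝ => x⁻¹ * (y - Real.log (Real.sqrt (2 * Real.pi) * x)))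
      atTop (nhds 0) := by
    have h1 : Tendsto (fun x : ℝ => (y - Real.log (Real.sqrt (2 * Real.pi))) * x⁻¹)
        atTop (nhds 0) := by
      simpa using tendsto_inv_atTop_zero.const_mul (y - Real.log (Real.sqrt (2 * Real.pi)))
    have h2 : Tendsto (fun x : ℝ => Real.log x / x) atTop (nhds 0) :=
      Real.isLittleO_log_id_atTop.tendsto_div_nhds_zero
    have := h1.sub h2
    rw [sub_zero] at this
    refine this.congr' ?_
    filter_upwards [eventually_gt_atTop (0 : ℝ)] with x hx
    have hs : (0 : ℝ) < Real.sqrt (2 * Real.pi) := Real.sqrt_pos.2 (by positivity)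
    rw [Real.log_mul (ne_of_gt hs) (ne_of_gt hx)]
    field_simp
    ring
  have : uP y = (fun x : ℝ => x⁻¹ * (y - Real.log (Real.sqrt (2 * Real.pi) * x))) ∘ alphaP := by
    funext p; simp [uP, tP, Function.comp]
  rw [this]
  exact hU.comp tendsto_alphaP

lemma tendsto_cP (y : ℝ) : Tendsto (fun p => cP p y) atTop atTop := by
  have hlow : Tendsto (fun p => alphaP p + (-1 : ℝ)) atTop atTop :=
    tendsto_atTop_add_const_right _ _ tendsto_alphaP
  refine tendsto_atTop_mono' _ ?_ hlow
  filter_upwards [(tendsto_uP y).eventually (eventually_ge_nhds (by norm_num : (-1:ℝ) < 0))]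
    with p hp
  rw [cP_eq]
  linarith

theorem density_over_cp_limit (y : ℝ) :
    Tendsto (fun p : ℕ => (p : ℝ) * stdNormalPDF (cP p y) / cP p y) atTop
      (nhds (Real.exp (-y))) := by
  have hu := tendsto_uP y
  have hc := tendsto_cP y
  -- the simpler equivalent expression
  have hexp : Tendsto (fun p => Real.exp (-(uP y p) ^ 2 / 2)) atTop (nhds 1) := by
    have h0 : Tendsto (fun p => -(uP y p) ^ 2 / 2) atTop (nhds 0) := by
      have := ((hu.pow 2).neg).div_const 2
      simpa using this
    have := (Real.continuous_exp.tendsto 0).comp h0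
    simpa [Function.comp_def] using this
  have hac : Tendsto (fun p => alphaP p / cP p y) atTop (nhds 1) := by
    have h1 : Tendsto (fun p => 1 - uP y p * (cP p y)⁻¹) atTop (nhds 1) := by
      have := (tendsto_const_nhds (x := (1:ℝ))).sub (hu.mul hc.inv_tendsto_atTop)
      simpa using this
    refine h1.congr' ?_
    filter_upwards [hc.eventually_gt_atTop 0] with p hcp
    have hcne : cP p y ≠ 0 := ne_of_gt hcp
    have : alphaP p = cP p y - uP y p := by rw [cP_eq]; ring
    rw [this]
    field_simp
  have hg : Tendsto (fun p => Real.exp (-y) * Real.exp (-(uP y p) ^ 2 / 2) *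
      (alphaP p / cP p y)) atTop (nhds (Real.exp (-y))) := by
    have := ((tendsto_const_nhds (x := Real.exp (-y))).mul hexp).mul hac
    simpa using this
  refine hg.congr' ?_
  filter_upwards [eventually_ge_atTop 3, hc.eventually_gt_atTop 0] with p hp hcp
  have hp1 : (1 : ℝ) < p := by
    have : (3 : ℝ) ≤ p := by exact_mod_cast hp
    linarith
  have hppos : (0 : ℝ) < p := by linarith
  have hlog : 0 < Real.log p := Real.log_pos hp1
  have ha : 0 < alphaP p := Real.sqrt_pos.2 (by linarith)
  have ha2 : alphaP p ^ 2 = 2 * Real.log p := Real.sq_sqrt (by linarith)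
  have hs : (0 : ℝ) < Real.sqrt (2 * Real.pi) := Real.sqrt_pos.2 (by positivity)
  have hcne : cP p y ≠ 0 := ne_of_gt hcp
  have hau : alphaP p * uP y p = tP y p := by
    unfold uP; field_simp
  have hcsq : cP p y ^ 2 = 2 * Real.log p + 2 * tP y p + (uP y p) ^ 2 := by
    rw [cP_eq, add_sq, ha2, mul_assoc, hau]
  have hexp1 : Real.exp (-(cP p y) ^ 2 / 2) =
      (p : ℝ)⁻¹ * (Real.sqrt (2 * Real.pi) * alphaP p * Real.exp (-y)) *
        Real.exp (-(uP y p) ^ 2 / 2) := by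
    rw [hcsq]
    rw [show -(2 * Real.log p + 2 * tP y p + (uP y p) ^ 2) / 2 =
        (-Real.log p) + (-tP y p) + (-(uP y p) ^ 2 / 2) by ring]
    rw [Real.exp_add, Real.exp_add, Real.exp_neg, Real.exp_log hppos]
    rw [show -tP y p = Real.log (Real.sqrt (2 * Real.pi) * alphaP p) + (-y) by unfold tP; ring]
    rw [Real.exp_add, Real.exp_log (by positivity)]
    try ring
  have key : (p : ℝ) * stdNormalPDF (cP p y) / cP p y
      = Real.exp (-y) * Real.exp (-(uP y p) ^ 2 / 2) * (alphaP p / cP p y) := by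
    unfold stdNormalPDF
    rw [hexp1]
    field_simp
    try ring
  exact key.symm
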